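/- In the Euclidean plane ℝ², let a = (0,0), ρ > 0, and let t, u ≥ 0 with u < ρ + t. Set x = (ρ+t, 0) and z = (u, 0). Then the minimum over p in the closed disc B̄(a,ρ) of h(p) = |x − p| − |z − p| equals t − ρ + u if u ≤ (ρ+t)ρ/(ρ+2t), and equals (ρ+t−u)·√(1 − ρ²/(u(ρ+t))) otherwise. -/

import Mathlib

set_option maxHeartbeats 1000000

open Metric

private lemma le_of_sq_le'' {x y : ℝ} (h : x^2 ≤ y^2) (hy : 0 ≤ y) (hx : 0 ≤ x) :
    x ≤ y := by nlinarith

private lemma dist_pt' (v : ℝ) (p : EuclideanSpace ℝ (Fin 2)) :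
    dist ((WithLp.equiv 2 (Fin 2 → ℝ)).symm ![v, 0]) p =
      Real.sqrt ((v - p 0) ^ 2 + (p 1) ^ 2) := by
  rw [EuclideanSpace.dist_eq]
  norm_num [Fin.sum_univ_two, Real.dist_eq, sq_abs]


private lemma pt_mem (w₀ w₁ ρ : ℝ) (h : w₀ ^ 2 + w₁ ^ 2 ≤ ρ ^ 2) (hρ : 0 ≤ ρ) :
    (WithLp.equiv 2 (Fin 2 → ℝ)).symm ![w₀, w₁] ∈
      closedBall (0 : EuclideanSpace ℝ (Fin 2)) ρ := by
  rw [mem_closedBall, EuclideanSpace.dist_eq]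
  norm_num [Fin.sum_univ_two, Real.dist_eq, sq_abs]
  calc Real.sqrt (w₀ ^ 2 + w₁ ^ 2) ≤ Real.sqrt (ρ ^ 2) := Real.sqrt_le_sqrt h
    _ = ρ := Real.sqrt_sq hρ


private lemma lower1 (ρ t u a b : ℝ) (hρ : 0 < ρ) (ht : 0 ≤ t) (hu : 0 ≤ u)
    (hlt : u < ρ + t) (hcase : u * (ρ + 2 * t) ≤ (ρ + t) * ρ)
    (hball : a ^ 2 + b ^ 2 ≤ ρ ^ 2) :
    t - ρ + u ≤ Real.sqrt ((ρ + t - a) ^ 2 + b ^ 2) - Real.sqrt ((u - a) ^ 2 + b ^ 2) := by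
  have huρ : u ≤ ρ := by nlinarith
  have haρ : a ≤ ρ := by nlinarith [sq_nonneg b, sq_nonneg (a + ρ)]
  set A := (ρ + t - a) ^ 2 + b ^ 2 with hAdef
  set B := (u - a) ^ 2 + b ^ 2 with hBdef
  have hA : 0 ≤ A := by positivity
  have hB : 0 ≤ B := by positivity
  have hA2 : Real.sqrt A ^ 2 = A := Real.sq_sqrt hA
  have hB2 : Real.sqrt B ^ 2 = B := Real.sq_sqrt hB
  rcases le_or_gt (t - ρ + u) 0 with hm | hm
  · -- m ≤ 0 subcase
    have hsA : ρ + t - ρ ≤ Real.sqrt A := by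
      have h1 : ρ + t - a ≤ Real.sqrt A := by
        rw [show A = (ρ + t - a) ^ 2 + b ^ 2 from rfl]
        rw [show (ρ+t-a)^2 + b^2 = (ρ+t-a)^2 + b^2 from rfl]
        have : ρ + t - a = Real.sqrt ((ρ+t-a)^2) := (Real.sqrt_sq (by linarith)).symm
        nth_rewrite 1 [this]
        exact Real.sqrt_le_sqrt (by nlinarith [sq_nonneg b])
      linarith
    have key : B ≤ (Real.sqrt A - (t - ρ + u)) ^ 2 := by
      nlinarith [mul_nonneg (by linarith : (0:ℝ) ≤ -2 * (t - ρ + u))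
          (by linarith : (0:ℝ) ≤ Real.sqrt A - (ρ + t - ρ)),
        mul_nonneg (by linarith : (0:ℝ) ≤ ρ + t - u) (by linarith : (0:ℝ) ≤ ρ - a)]
    have h3 : Real.sqrt B ≤ Real.sqrt A - (t - ρ + u) := by
      calc Real.sqrt B ≤ Real.sqrt ((Real.sqrt A - (t - ρ + u)) ^ 2) := Real.sqrt_le_sqrt key
        _ = Real.sqrt A - (t - ρ + u) :=
            Real.sqrt_sq (by nlinarith [Real.sqrt_nonneg A])
    linarith
  · -- m > 0 subcase
    have hDge : 0 ≤ A - B - (t - ρ + u) ^ 2 := by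
      nlinarith [mul_nonneg (by linarith : (0:ℝ) ≤ ρ + t - u) (by linarith : (0:ℝ) ≤ ρ - a),
        mul_nonneg hm.le (by linarith : (0:ℝ) ≤ ρ - u)]
    have hAB : A - B = (ρ + t - u) * (ρ + t + u - 2 * a) := by
      rw [hAdef, hBdef]; ring
    have hg' : 4 * (t - ρ + u) ^ 2 * ((u - a) ^ 2 + b ^ 2) ≤
        ((ρ + t - u) * (ρ + t + u - 2 * a) - (t - ρ + u) ^ 2) ^ 2 := by
      nlinarith [sq_nonneg ((ρ - a) * (ρ + t - u)),
        mul_nonneg (mul_nonneg (by nlinarith : (0:ℝ) ≤ ((ρ+t)*ρ - u*(ρ+2*t)) * (t - ρ + u))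
          (by linarith : (0:ℝ) ≤ ρ - a)) (by norm_num : (0:ℝ) ≤ (8:ℝ)),
        mul_nonneg (sq_nonneg (t - ρ + u)) (by linarith : (0:ℝ) ≤ ρ^2 - a^2 - b^2)]
    have hg : 4 * (t - ρ + u) ^ 2 * B ≤ (A - B - (t - ρ + u) ^ 2) ^ 2 := by
      calc 4 * (t - ρ + u) ^ 2 * B =
          4 * (t - ρ + u) ^ 2 * ((u - a) ^ 2 + b ^ 2) := by rw [hBdef]
        _ ≤ ((ρ + t - u) * (ρ + t + u - 2 * a) - (t - ρ + u) ^ 2) ^ 2 := hg'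
        _ = (A - B - (t - ρ + u) ^ 2) ^ 2 := by rw [hAB]
    have h2m : 2 * (t - ρ + u) * Real.sqrt B ≤ A - B - (t - ρ + u) ^ 2 := by
      apply le_of_sq_le'' _ hDge (by positivity)
      calc (2 * (t - ρ + u) * Real.sqrt B) ^ 2 = 4 * (t - ρ + u) ^ 2 * B := by
            rw [mul_pow, mul_pow, hB2]; ring
        _ ≤ _ := hg
    have hfin : (t - ρ + u) + Real.sqrt B ≤ Real.sqrt A := by
      apply le_of_sq_le'' _ (Real.sqrt_nonneg A)
        (by nlinarith [Real.sqrt_nonneg B])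
      nlinarith [h2m]
    linarith

private lemma lower2 (ρ t u a b : ℝ) (hρ : 0 < ρ) (ht : 0 ≤ t) (hu : 0 ≤ u)
    (hlt : u < ρ + t) (hcase : (ρ + t) * ρ < u * (ρ + 2 * t))
    (hball : a ^ 2 + b ^ 2 ≤ ρ ^ 2) :
    (ρ + t - u) * Real.sqrt (1 - ρ ^ 2 / (u * (ρ + t))) ≤
      Real.sqrt ((ρ + t - a) ^ 2 + b ^ 2) - Real.sqrt ((u - a) ^ 2 + b ^ 2) := by
  have hs : 0 < ρ + t := by linarith
  have hu0 : 0 < u := by nlinarith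
  have hus : 0 < u * (ρ + t) := by positivity
  have hW : 0 < u * (ρ + t) - ρ ^ 2 := by
    nlinarith [mul_pos hs (by linarith : (0:ℝ) < u * (ρ + 2 * t) - (ρ + t) * ρ),
      mul_nonneg hρ.le (sq_nonneg (ρ + t - ρ))]
  have haρ : a ≤ ρ := by nlinarith [sq_nonneg b, sq_nonneg (a + ρ)]
  set A := (ρ + t - a) ^ 2 + b ^ 2 with hAdef
  set B := (u - a) ^ 2 + b ^ 2 with hBdef
  have hA : 0 ≤ A := by positivity
  have hB : 0 ≤ B := by positivity
  have hA2 : Real.sqrt A ^ 2 = A := Real.sq_sqrt hA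
  have hB2 : Real.sqrt B ^ 2 = B := Real.sq_sqrt hB
  set W := u * (ρ + t) - ρ ^ 2 with hWdef
  -- rewrite the sqrt on the left
  have hsq1 : Real.sqrt (1 - ρ ^ 2 / (u * (ρ + t))) =
      Real.sqrt (W * (u * (ρ + t))) / (u * (ρ + t)) := by
    have h1 : 1 - ρ ^ 2 / (u * (ρ + t)) = (W * (u * (ρ + t))) / (u * (ρ + t)) ^ 2 := by
      field_simp
      ring
    rw [h1, Real.sqrt_div (by positivity), Real.sqrt_sq hus.le]
  have hAB : A - B = (ρ + t - u) * (ρ + t + u - 2 * a) := by rw [hAdef, hBdef]; ring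
  clear_value A B W
  -- K ≥ 0
  have hf2 : 0 ≤ (ρ + 2 * t) ^ 2 * (2 * (ρ + t) * u * (u - a) + ρ ^ 2 * (ρ + t - u)) := by
    nlinarith [sq_nonneg (u * (ρ + 2 * t) - (ρ + t) * ρ),
      mul_nonneg (mul_nonneg hρ.le (mul_nonneg hρ.le hρ.le))
        (by linarith : (0:ℝ) ≤ u * (ρ + 2 * t) - (ρ + t) * ρ),
      mul_nonneg (mul_nonneg hs.le hρ.le) (sq_nonneg (ρ + t - ρ)),
      mul_nonneg (mul_nonneg (mul_nonneg (mul_nonneg hs.le hu0.le)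
        (by linarith : (0:ℝ) ≤ ρ - a)) (sq_nonneg (ρ + 2 * t)))
        (by norm_num : (0:ℝ) ≤ 2)]
  have hf : 0 ≤ 2 * (ρ + t) * u * (u - a) + ρ ^ 2 * (ρ + t - u) :=
    nonneg_of_mul_nonneg_right hf2 (by positivity)
  have hsu' : 0 < ρ + t - u := by linarith
  set K := u * (ρ + t) * (A - B) - (ρ + t - u) ^ 2 * W with hKdef
  have hKeq : K = (ρ + t - u) * (2 * (ρ + t) * u * (u - a) + ρ ^ 2 * (ρ + t - u)) := by
    rw [hKdef, hAB, hWdef]; ring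
  have hK : 0 ≤ K := by
    rw [hKeq]; exact mul_nonneg hsu'.le hf
  have hWsuB : 0 ≤ W * (u * (ρ + t)) * B := by positivity
  have hKsq : (2 * (ρ + t - u)) ^ 2 * (W * (u * (ρ + t)) * B) ≤ K ^ 2 := by
    have hexp : K ^ 2 - (2 * (ρ + t - u)) ^ 2 * (W * (u * (ρ + t)) * B) =
        (ρ + t - u) ^ 2 * ((2 * (ρ + t) * u * a - ρ ^ 2 * (ρ + t + u)) ^ 2
          + 4 * (ρ + t) * u * W * (ρ ^ 2 - a ^ 2 - b ^ 2)) := by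
      rw [hKdef, hAB, hBdef, hWdef]; ring
    nlinarith [hexp, sq_nonneg ((ρ + t - u) * (2 * (ρ + t) * u * a - ρ ^ 2 * (ρ + t + u))),
      mul_nonneg (mul_nonneg (mul_nonneg (mul_nonneg (sq_nonneg (ρ + t - u)) hs.le) hu0.le)
        hW.le) (by linarith : (0:ℝ) ≤ ρ ^ 2 - a ^ 2 - b ^ 2),
      mul_nonneg (sq_nonneg (ρ + t - u)) (by norm_num : (0:ℝ) ≤ 4)]
  have h2 : 2 * (ρ + t - u) * Real.sqrt (W * (u * (ρ + t)) * B) ≤ K := by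
    apply le_of_sq_le'' _ hK (by positivity)
    calc (2 * (ρ + t - u) * Real.sqrt (W * (u * (ρ + t)) * B)) ^ 2
        = (2 * (ρ + t - u)) ^ 2 * (W * (u * (ρ + t)) * B) := by
          rw [mul_pow, Real.sq_sqrt hWsuB]
      _ ≤ K ^ 2 := hKsq
  have hQ : Real.sqrt (W * (u * (ρ + t)) * B) =
      Real.sqrt (W * (u * (ρ + t))) * Real.sqrt B := Real.sqrt_mul (by positivity) B
  have hSW2 : Real.sqrt (W * (u * (ρ + t))) ^ 2 = W * (u * (ρ + t)) :=
    Real.sq_sqrt (by positivity)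
  have h3 : u * (ρ + t) * Real.sqrt B + (ρ + t - u) * Real.sqrt (W * (u * (ρ + t))) ≤
      u * (ρ + t) * Real.sqrt A := by
    apply le_of_sq_le'' _ (by positivity) (by positivity)
    rw [hQ, hKdef] at h2
    rw [← sub_nonneg]
    have expand : (u * (ρ + t) * Real.sqrt A) ^ 2 -
        (u * (ρ + t) * Real.sqrt B + (ρ + t - u) * Real.sqrt (W * (u * (ρ + t)))) ^ 2
        = (u * (ρ + t)) * ((u * (ρ + t) * (A - B) - (ρ + t - u) ^ 2 * W) -
            2 * (ρ + t - u) * (Real.sqrt (W * (u * (ρ + t))) * Real.sqrt B)) := by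
      linear_combination (u * (ρ + t)) ^ 2 * hA2 - (u * (ρ + t)) ^ 2 * hB2 -
        (ρ + t - u) ^ 2 * hSW2
    rw [expand]
    exact mul_nonneg hus.le (by linarith)
  rw [hsq1]
  rw [← sub_nonneg]
  have : Real.sqrt A - Real.sqrt B - (ρ + t - u) * (Real.sqrt (W * (u * (ρ + t))) / (u * (ρ + t)))
      = (u * (ρ + t) * Real.sqrt A - (u * (ρ + t) * Real.sqrt B
          + (ρ + t - u) * Real.sqrt (W * (u * (ρ + t))))) / (u * (ρ + t)) := by
    field_simp
    ring
  rw [this]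
  exact div_nonneg (by linarith) hus.le

/-- Minimum of `h(p) = |x − p| − |z − p|` over the closed disc of
radius `ρ` about the origin in the Euclidean plane, where `x = (ρ+t, 0)` and
`z = (u, 0)` with `t, u ≥ 0` and `u < ρ + t`. -/
theorem min_h_euclidean_plane (ρ t u : ℝ) (hρ : 0 < ρ) (ht : 0 ≤ t) (hu : 0 ≤ u)
    (hlt : u < ρ + t) :
    IsLeast
      ((fun p : EuclideanSpace ℝ (Fin 2) =>
          dist ((WithLp.equiv 2 (Fin 2 → ℝ)).symm ![ρ + t, 0]) p -
            dist ((WithLp.equiv 2 (Fin 2 → ℝ)).symm ![u, 0]) p) ''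
        closedBall (0 : EuclideanSpace ℝ (Fin 2)) ρ)
      (if u ≤ (ρ + t) * ρ / (ρ + 2 * t) then t - ρ + u
       else (ρ + t - u) * Real.sqrt (1 - ρ ^ 2 / (u * (ρ + t)))) := by
  have h2t : (0:ℝ) < ρ + 2 * t := by linarith
  constructor
  · -- membership
    by_cases hcase : u ≤ (ρ + t) * ρ / (ρ + 2 * t)
    · rw [if_pos hcase]
      have hcase' : u * (ρ + 2 * t) ≤ (ρ + t) * ρ := by
        rw [le_div_iff₀ h2t] at hcase; linarith
      have huρ : u ≤ ρ := by nlinarith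
      refine ⟨(WithLp.equiv 2 (Fin 2 → ℝ)).symm ![ρ, 0], pt_mem _ _ _ (by nlinarith) hρ.le, ?_⟩
      simp only [dist_pt']
      simp only [WithLp.equiv_symm_apply, WithLp.ofLp_toLp, Matrix.cons_val_zero,
        Matrix.cons_val_one, Matrix.head_cons]
      rw [show ((0:ℝ)^2 : ℝ) = 0 from by norm_num]
      rw [show (ρ + t - ρ)^2 + 0 = t^2 from by ring, Real.sqrt_sq ht,
        show (u - ρ)^2 + 0 = (ρ - u)^2 from by ring, Real.sqrt_sq (by linarith)]
      ring
    · rw [if_neg hcase]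
      push_neg at hcase
      have h2t : (0:ℝ) < ρ + 2 * t := by linarith
      have hcase' : (ρ + t) * ρ < u * (ρ + 2 * t) := by
        rw [div_lt_iff₀ h2t] at hcase; linarith
      have hs : 0 < ρ + t := by linarith
      have hu0 : 0 < u := by nlinarith
      set aa := ρ ^ 2 * (ρ + t + u) / (2 * u * (ρ + t)) with haadef
      have haa0 : 0 ≤ aa := by positivity
      have haaρ : aa ≤ ρ := by
        rw [haadef, div_le_iff₀ (by positivity)]
        nlinarith
      have haa2 : aa ^ 2 ≤ ρ ^ 2 := by nlinarith
      set bb := Real.sqrt (ρ ^ 2 - aa ^ 2) with hbbdef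
      have hbb2 : bb ^ 2 = ρ ^ 2 - aa ^ 2 := Real.sq_sqrt (by linarith)
      refine ⟨(WithLp.equiv 2 (Fin 2 → ℝ)).symm ![aa, bb], pt_mem _ _ _ (by rw [hbb2]; ring_nf; rfl) hρ.le, ?_⟩
      simp only [dist_pt']
      simp only [WithLp.equiv_symm_apply, WithLp.ofLp_toLp, Matrix.cons_val_zero, Matrix.cons_val_one,
        Matrix.head_cons]
      have hAval : (ρ + t - aa) ^ 2 + bb ^ 2 = (ρ + t) ^ 2 * (1 - ρ ^ 2 / (u * (ρ + t))) := by
        rw [hbb2, haadef]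
        field_simp
        ring
      have hBval : (u - aa) ^ 2 + bb ^ 2 = u ^ 2 * (1 - ρ ^ 2 / (u * (ρ + t))) := by
        rw [hbb2, haadef]
        field_simp
        ring
      rw [hAval, hBval, Real.sqrt_mul (sq_nonneg _), Real.sqrt_mul (sq_nonneg _),
        Real.sqrt_sq hs.le, Real.sqrt_sq hu0.le]
      ring
  · -- lower bound
    rintro v ⟨p, hp, rfl⟩
    have hball : (p 0) ^ 2 + (p 1) ^ 2 ≤ ρ ^ 2 := by
      rw [mem_closedBall, EuclideanSpace.dist_eq] at hp
      have h0 : ∀ i, dist (p i) ((0 : EuclideanSpace ℝ (Fin 2)) i) = |p i| := by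
        intro i; simp [Real.dist_eq]
      rw [Fin.sum_univ_two, h0, h0] at hp
      have hnn : (0:ℝ) ≤ |p 0| ^ 2 + |p 1| ^ 2 := by positivity
      have := Real.sqrt_le_sqrt (Real.sq_sqrt hnn ▸ pow_le_pow_left₀ (Real.sqrt_nonneg _) hp 2)
      nlinarith [Real.sq_sqrt hnn, pow_le_pow_left₀ (Real.sqrt_nonneg _) hp 2, sq_abs (p 0), sq_abs (p 1)]
    simp only [dist_pt']
    by_cases hcase : u ≤ (ρ + t) * ρ / (ρ + 2 * t)
    · rw [if_pos hcase]
      have hcase' : u * (ρ + 2 * t) ≤ (ρ + t) * ρ := by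
        rw [le_div_iff₀ h2t] at hcase; linarith
      exact lower1 ρ t u (p 0) (p 1) hρ ht hu hlt hcase' hball
    · rw [if_neg hcase]
      push_neg at hcase
      have hcase' : (ρ + t) * ρ < u * (ρ + 2 * t) := by
        rw [div_lt_iff₀ h2t] at hcase; linarith
      exact lower2 ρ t u (p 0) (p 1) hρ ht hu hlt hcase' hball
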